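/- arXiv:1404.2730 — 2 statements merged into one kernel-verified Lean document; each statement's English description precedes it below -/
import Mathlib

section
/- Let f and g be homogeneous polynomials on ℝ^N × ℝ^N of degrees r and s respectively. Then {f, g} is a homogeneous polynomial of degree r + s − 2 and ‖{f,g}‖_1 ≤ r s ‖f‖_1 ‖g‖_1. Moreover there exists a seed h of the cyclically symmetric function {f^⊕, g^⊕} with ‖h‖_1 ≤ r s ‖f‖_1 ‖g‖_1. -/
open MvPolynomial Finset Real

/-- index set for the `2N` variables: `inl j` ↦ `x_j`, `inr j` ↦ `y_j` (indices mod `N`). -/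
abbrev Idx (N : ℕ) := Fin N ⊕ Fin N

open Fin.CommRing in
/-- the cyclic shift `τ^s` (`s ∈ ℤ`) acting on polynomials: `τ^s X_j = X_{j+s}`
(indices mod `N`), separately on the `x` and `y` variables, so that
`(τ^s f)(x,y) = f(τ^s x, τ^s y)`. -/
noncomputable def tauPow (N : ℕ) [NeZero N] (s : ℤ) (f : MvPolynomial (Idx N) ℝ) :
    MvPolynomial (Idx N) ℝ :=
  rename (Sum.map (· + (s : Fin N)) (· + (s : Fin N))) f

/-- `f ↦ f^⊕ := ∑_{l=1}^N τ^l f`. -/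
noncomputable def oplus (N : ℕ) [NeZero N] (f : MvPolynomial (Idx N) ℝ) :
    MvPolynomial (Idx N) ℝ :=
  ∑ l ∈ Finset.range N, tauPow N ((l : ℤ) + 1) f

/-- the polynomial norm `‖f‖_R`; for a homogeneous polynomial of degree `s` it equals
`R^s ∑_{|j|+|k|=s} |f_{j,k}|`. -/
noncomputable def pnorm {N : ℕ} (R : ℝ) (f : MvPolynomial (Idx N) ℝ) : ℝ :=
  ∑ d ∈ f.support, |f.coeff d| * R ^ (d.sum fun _ e => e)

/-- the Poisson bracket `{f,g} = ∑_j (∂f/∂x_j ∂g/∂y_j − ∂f/∂y_j ∂g/∂x_j)`. -/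
noncomputable def poisson (N : ℕ) (f g : MvPolynomial (Idx N) ℝ) : MvPolynomial (Idx N) ℝ :=
  ∑ j : Fin N,
    (pderiv (Sum.inl j) f * pderiv (Sum.inr j) g - pderiv (Sum.inr j) f * pderiv (Sum.inl j) g)

/-! ### Auxiliary material -/

open Fin.CommRing

set_option linter.unusedSectionVars false

section PnormBasics

variable {N : ℕ}

/-- abbreviation for the ℓ¹ norm of coefficients, which equals `pnorm 1`. -/
noncomputable def Pn (f : MvPolynomial (Idx N) ℝ) : ℝ := ∑ d ∈ f.support, |f.coeff d|

lemma pnorm_one_eq (f : MvPolynomial (Idx N) ℝ) : pnorm 1 f = Pn f := by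
  simp [pnorm, Pn]

lemma Pn_nonneg (f : MvPolynomial (Idx N) ℝ) : 0 ≤ Pn f :=
  Finset.sum_nonneg fun _ _ => abs_nonneg _

lemma Pn_zero : Pn (0 : MvPolynomial (Idx N) ℝ) = 0 := by simp [Pn]

lemma Pn_eq_of_subset {f : MvPolynomial (Idx N) ℝ} {t : Finset ((Idx N) →₀ ℕ)}
    (h : f.support ⊆ t) : Pn f = ∑ d ∈ t, |f.coeff d| := by
  refine Finset.sum_subset h fun d _ hd => ?_
  rw [MvPolynomial.notMem_support_iff.mp hd, abs_zero]

lemma Pn_add_le (a b : MvPolynomial (Idx N) ℝ) : Pn (a + b) ≤ Pn a + Pn b := by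
  classical
  rw [Pn_eq_of_subset (MvPolynomial.support_add (p := a) (q := b)),
    Pn_eq_of_subset (Finset.subset_union_left (s₁ := a.support) (s₂ := b.support)),
    Pn_eq_of_subset (Finset.subset_union_right (s₁ := a.support) (s₂ := b.support)),
    ← Finset.sum_add_distrib]
  exact Finset.sum_le_sum fun d _ => by rw [coeff_add]; exact abs_add_le _ _

lemma Pn_neg (a : MvPolynomial (Idx N) ℝ) : Pn (-a) = Pn a := by
  simp [Pn, MvPolynomial.support_neg]

lemma Pn_sub_le (a b : MvPolynomial (Idx N) ℝ) : Pn (a - b) ≤ Pn a + Pn b := by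
  rw [sub_eq_add_neg, ← Pn_neg b]; exact Pn_add_le _ _

lemma Pn_sum_le {ι : Type*} (t : Finset ι) (F : ι → MvPolynomial (Idx N) ℝ) :
    Pn (∑ i ∈ t, F i) ≤ ∑ i ∈ t, Pn (F i) := by
  classical
  induction t using Finset.induction_on with
  | empty => simp [Pn_zero]
  | insert _ _ hit ih =>
      rw [Finset.sum_insert hit, Finset.sum_insert hit]
      exact (Pn_add_le _ _).trans (by linarith)

lemma Pn_monomial (d : (Idx N) →₀ ℕ) (c : ℝ) : Pn (monomial d c) = |c| := by
  by_cases hc : c = 0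
  · simp [Pn, hc]
  · classical
    simp [Pn, MvPolynomial.support_monomial, hc, MvPolynomial.coeff_monomial]

lemma Pn_mul_le (a b : MvPolynomial (Idx N) ℝ) : Pn (a * b) ≤ Pn a * Pn b := by
  conv_lhs => rw [a.as_sum, b.as_sum, Finset.sum_mul_sum]
  refine (Pn_sum_le _ _).trans ?_
  calc ∑ d ∈ a.support, Pn (∑ e ∈ b.support, monomial d (a.coeff d) * monomial e (b.coeff e))
      ≤ ∑ d ∈ a.support, ∑ e ∈ b.support, Pn (monomial d (a.coeff d) * monomial e (b.coeff e)) :=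
        Finset.sum_le_sum fun d _ => Pn_sum_le _ _
    _ = ∑ d ∈ a.support, ∑ e ∈ b.support, |a.coeff d| * |b.coeff e| := by
        refine Finset.sum_congr rfl fun d _ => Finset.sum_congr rfl fun e _ => ?_
        rw [monomial_mul, Pn_monomial, abs_mul]
    _ = Pn a * Pn b := by rw [← Finset.sum_mul_sum]; rfl

end PnormBasics

section Degrees

variable {N : ℕ}

lemma degree_fin (d : (Idx N) →₀ ℕ) : ∑ i : Idx N, d i = d.degree :=
  (Finset.sum_subset (Finset.subset_univ _)
    (fun i _ hi => Finsupp.notMem_support_iff.mp hi)).symm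

lemma degree_of_mem_support {f : MvPolynomial (Idx N) ℝ} {r : ℕ} (hf : f.IsHomogeneous r)
    {d : (Idx N) →₀ ℕ} (hd : d ∈ f.support) : d.degree = r := by
  rw [Finsupp.degree_eq_weight_one]
  exact hf (MvPolynomial.mem_support_iff.mp hd)

lemma Pn_pderiv_le (f : MvPolynomial (Idx N) ℝ) (i : Idx N) :
    Pn (pderiv i f) ≤ ∑ d ∈ f.support, |f.coeff d| * (d i : ℝ) := by
  conv_lhs => rw [f.as_sum, map_sum]
  refine (Pn_sum_le _ _).trans (le_of_eq (Finset.sum_congr rfl fun d _ => ?_))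
  rw [pderiv_monomial, Pn_monomial, abs_mul, Nat.abs_cast]

lemma sum_Pn_pderiv_le {f : MvPolynomial (Idx N) ℝ} {r : ℕ} (hf : f.IsHomogeneous r) :
    ∑ i : Idx N, Pn (pderiv i f) ≤ r * Pn f := by
  calc ∑ i : Idx N, Pn (pderiv i f) ≤ ∑ i : Idx N, ∑ d ∈ f.support, |f.coeff d| * (d i : ℝ) :=
        Finset.sum_le_sum fun i _ => Pn_pderiv_le f i
    _ = ∑ d ∈ f.support, ∑ i : Idx N, |f.coeff d| * (d i : ℝ) := Finset.sum_comm
    _ = ∑ d ∈ f.support, |f.coeff d| * (r : ℝ) := by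
        refine Finset.sum_congr rfl fun d hd => ?_
        rw [← Finset.mul_sum]
        congr 1
        rw [← Nat.cast_sum, degree_fin, degree_of_mem_support hf hd]
    _ = r * Pn f := by rw [← Finset.sum_mul, mul_comm]; rfl

lemma pderiv_isHomogeneous {f : MvPolynomial (Idx N) ℝ} {r : ℕ} (hf : f.IsHomogeneous r)
    (i : Idx N) : (pderiv i f).IsHomogeneous (r - 1) := by
  conv_lhs => rw [f.as_sum, map_sum]
  refine IsHomogeneous.sum _ _ _ fun d hd => ?_
  rw [pderiv_monomial]
  by_cases h : d i = 0
  · simp only [h, Nat.cast_zero, mul_zero, map_zero]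
    exact isHomogeneous_zero _ _ _
  · apply isHomogeneous_monomial
    have h2 : (d - Finsupp.single i 1).degree + 1 = d.degree := by
      classical
      rw [← degree_fin, ← degree_fin]
      have key : ∀ i' : Idx N,
          ((d - Finsupp.single i 1 : (Idx N) →₀ ℕ)) i' + (Finsupp.single i 1) i' = d i' := by
        intro i'
        simp only [Finsupp.tsub_apply, Finsupp.single_apply]
        split_ifs with hh
        · cases hh; omega
        · omega
      have hsum : ∑ i' : Idx N, d i'
          = ∑ i' : Idx N, (((d - Finsupp.single i 1 : (Idx N) →₀ ℕ)) i' + (Finsupp.single i 1) i') :=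
        Finset.sum_congr rfl fun i' _ => (key i').symm
      rw [hsum, Finset.sum_add_distrib]
      congr 1
      simp [Finsupp.single_apply]
    have h3 := degree_of_mem_support hf hd
    omega

lemma pderiv_eq_zero_of_homog_zero {f : MvPolynomial (Idx N) ℝ} (hf : f.IsHomogeneous 0)
    (i : Idx N) : pderiv i f = 0 := by
  conv_lhs => rw [f.as_sum, map_sum]
  refine Finset.sum_eq_zero fun d hd => ?_
  have h3 := degree_of_mem_support hf hd
  have h4 : d i = 0 := by
    have := Finsupp.le_degree i d
    omega
  rw [pderiv_monomial, h4]
  simp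

end Degrees

section Shifts

variable {N : ℕ} [NeZero N]

lemma shift_inj (c : Fin N) :
    Function.Injective (Sum.map (· + c) (· + c) : Idx N → Idx N) :=
  Function.Injective.sumMap (add_left_injective c) (add_left_injective c)

lemma Pn_rename {σ : Idx N → Idx N} (hσ : Function.Injective σ) (f : MvPolynomial (Idx N) ℝ) :
    Pn (rename σ f) = Pn f := by
  classical
  unfold Pn
  rw [MvPolynomial.support_rename_of_injective hσ, Finset.sum_image
    (fun x _ y _ h => Finsupp.mapDomain_injective hσ h)]
  exact Finset.sum_congr rfl fun d _ => by rw [MvPolynomial.coeff_rename_mapDomain σ hσ]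

lemma Pn_tauPow (t : ℤ) (f : MvPolynomial (Idx N) ℝ) : Pn (tauPow N t f) = Pn f :=
  Pn_rename (shift_inj _) f

lemma pderiv_tauPow_inl (t : ℤ) (j : Fin N) (g : MvPolynomial (Idx N) ℝ) :
    pderiv (Sum.inl j) (tauPow N t g) = tauPow N t (pderiv (Sum.inl (j - (t : Fin N))) g) := by
  have h : (Sum.inl j : Idx N)
      = Sum.map (· + (t : Fin N)) (· + (t : Fin N)) (Sum.inl (j - (t : Fin N))) := by
    simp [sub_add_cancel]
  rw [tauPow, h, pderiv_rename (shift_inj _), tauPow]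

lemma pderiv_tauPow_inr (t : ℤ) (j : Fin N) (g : MvPolynomial (Idx N) ℝ) :
    pderiv (Sum.inr j) (tauPow N t g) = tauPow N t (pderiv (Sum.inr (j - (t : Fin N))) g) := by
  have h : (Sum.inr j : Idx N)
      = Sum.map (· + (t : Fin N)) (· + (t : Fin N)) (Sum.inr (j - (t : Fin N))) := by
    simp [sub_add_cancel]
  rw [tauPow, h, pderiv_rename (shift_inj _), tauPow]

lemma tauPow_tauPow (a b : ℤ) (f : MvPolynomial (Idx N) ℝ) :
    tauPow N a (tauPow N b f) = tauPow N (a + b) f := by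
  unfold tauPow
  rw [rename_rename]
  have hmap : ((Sum.map (· + ((a : ℤ) : Fin N)) (· + ((a : ℤ) : Fin N))) ∘
        (Sum.map (· + ((b : ℤ) : Fin N)) (· + ((b : ℤ) : Fin N))) : Idx N → Idx N)
      = Sum.map (· + (((a + b : ℤ)) : Fin N)) (· + (((a + b : ℤ)) : Fin N)) := by
    funext i
    cases i <;>
    · simp only [Function.comp_apply, Sum.map_inl, Sum.map_inr]
      congr 1
      push_cast
      ring
  rw [hmap]

lemma tauPow_sum {ι : Type*} (t : Finset ι) (a : ℤ) (F : ι → MvPolynomial (Idx N) ℝ) :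
    tauPow N a (∑ i ∈ t, F i) = ∑ i ∈ t, tauPow N a (F i) := by
  unfold tauPow; rw [map_sum]

lemma poisson_tauPow (t : ℤ) (a b : MvPolynomial (Idx N) ℝ) :
    tauPow N t (poisson N a b) = poisson N (tauPow N t a) (tauPow N t b) := by
  unfold poisson
  rw [tauPow_sum]
  refine Fintype.sum_equiv (Equiv.addRight (t : Fin N)) _ _ fun j => ?_
  have e1 := pderiv_tauPow_inl t (j + (t : Fin N)) a
  have e2 := pderiv_tauPow_inr t (j + (t : Fin N)) b
  have e3 := pderiv_tauPow_inr t (j + (t : Fin N)) a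
  have e4 := pderiv_tauPow_inl t (j + (t : Fin N)) b
  simp only [add_sub_cancel_right] at e1 e2 e3 e4
  simp only [tauPow] at e1 e2 e3 e4 ⊢
  simp only [Equiv.coe_addRight, map_sub, map_mul, e1, e2, e3, e4]

lemma poisson_sum_left {ι : Type*} (t : Finset ι) (F : ι → MvPolynomial (Idx N) ℝ)
    (g : MvPolynomial (Idx N) ℝ) :
    poisson N (∑ i ∈ t, F i) g = ∑ i ∈ t, poisson N (F i) g := by
  unfold poisson
  rw [Finset.sum_comm]
  refine Finset.sum_congr rfl fun j _ => ?_
  simp only [map_sum, Finset.sum_mul, ← Finset.sum_sub_distrib]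

lemma poisson_sum_right {ι : Type*} (t : Finset ι) (f : MvPolynomial (Idx N) ℝ)
    (G : ι → MvPolynomial (Idx N) ℝ) :
    poisson N f (∑ i ∈ t, G i) = ∑ i ∈ t, poisson N f (G i) := by
  unfold poisson
  rw [Finset.sum_comm]
  refine Finset.sum_congr rfl fun j _ => ?_
  simp only [map_sum, Finset.mul_sum, ← Finset.sum_sub_distrib]

lemma sum_range_shift {M : Type*} [AddCommMonoid M] (G : Fin N → M) (c : Fin N) :
    ∑ t ∈ Finset.range N, G (c + (t : Fin N)) = ∑ k : Fin N, G k := by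
  rw [← Fin.sum_univ_eq_sum_range (fun m => G (c + (m : Fin N))) N]
  simp_rw [Fin.cast_val_eq_self]
  exact Fintype.sum_equiv (Equiv.addLeft c) (fun i => G (c + i)) G fun i => rfl

lemma sum_range_sub_shift {M : Type*} [AddCommMonoid M] (G : Fin N → M) (c : Fin N) :
    ∑ t ∈ Finset.range N, G (c - (t : Fin N)) = ∑ k : Fin N, G k := by
  rw [← Fin.sum_univ_eq_sum_range (fun m => G (c - (m : Fin N))) N]
  simp_rw [Fin.cast_val_eq_self]
  exact Fintype.sum_equiv (Equiv.subLeft c) (fun i => G (c - i)) G fun i => rfl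

end Shifts

section MainBounds

variable {N : ℕ} [NeZero N]

lemma diag_sum_le (u v : Fin N → ℝ) (hu : ∀ j, 0 ≤ u j) (hv : ∀ j, 0 ≤ v j) :
    ∑ j : Fin N, u j * v j ≤ (∑ j : Fin N, u j) * (∑ j : Fin N, v j) := by
  rw [Finset.sum_mul_sum]
  refine Finset.sum_le_sum fun j _ => ?_
  rw [← Finset.mul_sum]
  refine mul_le_mul_of_nonneg_left ?_ (hu j)
  exact Finset.single_le_sum (fun k _ => hv k) (Finset.mem_univ j)

lemma ADBC_le {f g : MvPolynomial (Idx N) ℝ} {r s : ℕ}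
    (hf : f.IsHomogeneous r) (hg : g.IsHomogeneous s) :
    (∑ j : Fin N, Pn (pderiv (Sum.inl j) f)) * (∑ j : Fin N, Pn (pderiv (Sum.inr j) g)) +
      (∑ j : Fin N, Pn (pderiv (Sum.inr j) f)) * (∑ j : Fin N, Pn (pderiv (Sum.inl j) g))
      ≤ (r * Pn f) * (s * Pn g) := by
  set A := ∑ j : Fin N, Pn (pderiv (Sum.inl j) f) with hA
  set B := ∑ j : Fin N, Pn (pderiv (Sum.inr j) f) with hB
  set C := ∑ j : Fin N, Pn (pderiv (Sum.inl j) g) with hC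
  set D := ∑ j : Fin N, Pn (pderiv (Sum.inr j) g) with hD
  have hAB : A + B ≤ r * Pn f := by
    have := sum_Pn_pderiv_le hf
    rwa [Fintype.sum_sum_type] at this
  have hCD : C + D ≤ s * Pn g := by
    have := sum_Pn_pderiv_le hg
    rwa [Fintype.sum_sum_type] at this
  have hA0 : 0 ≤ A := Finset.sum_nonneg fun _ _ => Pn_nonneg _
  have hB0 : 0 ≤ B := Finset.sum_nonneg fun _ _ => Pn_nonneg _
  have hC0 : 0 ≤ C := Finset.sum_nonneg fun _ _ => Pn_nonneg _
  have hD0 : 0 ≤ D := Finset.sum_nonneg fun _ _ => Pn_nonneg _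
  have hmul : (A + B) * (C + D) ≤ (r * Pn f) * (s * Pn g) :=
    mul_le_mul hAB hCD (by linarith) (by linarith)
  nlinarith [mul_nonneg hA0 hC0, mul_nonneg hB0 hD0]

end MainBounds

/-- For `f, g` homogeneous of degrees `r, s`, `{f,g}` is homogeneous of
degree `r+s−2` with `‖{f,g}‖₁ ≤ r s ‖f‖₁ ‖g‖₁`, and `{f^⊕, g^⊕}` admits a seed `h` with
`‖h‖₁ ≤ r s ‖f‖₁ ‖g‖₁`. -/
theorem poisson_norm_estimate (N : ℕ) [NeZero N]
    (r s : ℕ) (f g : MvPolynomial (Idx N) ℝ)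
    (hf : f.IsHomogeneous r) (hg : g.IsHomogeneous s) :
    (poisson N f g).IsHomogeneous (r + s - 2) ∧
    pnorm 1 (poisson N f g) ≤ r * s * pnorm 1 f * pnorm 1 g ∧
    ∃ h : MvPolynomial (Idx N) ℝ,
      oplus N h = poisson N (oplus N f) (oplus N g) ∧
      pnorm 1 h ≤ r * s * pnorm 1 f * pnorm 1 g := by
  -- 1. homogeneity
  have homog : (poisson N f g).IsHomogeneous (r + s - 2) := by
    by_cases hr : r = 0
    · subst hr
      have hz : poisson N f g = 0 := by
        unfold poisson
        refine Finset.sum_eq_zero fun j _ => ?_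
        rw [pderiv_eq_zero_of_homog_zero hf, pderiv_eq_zero_of_homog_zero hf,
          zero_mul, zero_mul, sub_zero]
      rw [hz]; exact isHomogeneous_zero _ _ _
    by_cases hs : s = 0
    · subst hs
      have hz : poisson N f g = 0 := by
        unfold poisson
        refine Finset.sum_eq_zero fun j _ => ?_
        rw [pderiv_eq_zero_of_homog_zero hg, pderiv_eq_zero_of_homog_zero hg,
          mul_zero, mul_zero, sub_zero]
      rw [hz]; exact isHomogeneous_zero _ _ _
    · have e : r - 1 + (s - 1) = r + s - 2 := by omega
      refine IsHomogeneous.sum _ _ _ fun j _ => ?_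
      exact e ▸ (((pderiv_isHomogeneous hf _).mul (pderiv_isHomogeneous hg _)).sub
        ((pderiv_isHomogeneous hf _).mul (pderiv_isHomogeneous hg _)))
  -- 2. norm bound on the bracket
  have bound2 : Pn (poisson N f g) ≤ (r * Pn f) * (s * Pn g) := by
    have step1 : Pn (poisson N f g) ≤ ∑ j : Fin N,
        (Pn (pderiv (Sum.inl j) f) * Pn (pderiv (Sum.inr j) g)
          + Pn (pderiv (Sum.inr j) f) * Pn (pderiv (Sum.inl j) g)) := by
      refine (Pn_sum_le _ _).trans (Finset.sum_le_sum fun j _ => ?_)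
      exact (Pn_sub_le _ _).trans (add_le_add (Pn_mul_le _ _) (Pn_mul_le _ _))
    have step2 : ∑ j : Fin N,
        (Pn (pderiv (Sum.inl j) f) * Pn (pderiv (Sum.inr j) g)
          + Pn (pderiv (Sum.inr j) f) * Pn (pderiv (Sum.inl j) g))
        ≤ (∑ j : Fin N, Pn (pderiv (Sum.inl j) f)) * (∑ j : Fin N, Pn (pderiv (Sum.inr j) g)) +
          (∑ j : Fin N, Pn (pderiv (Sum.inr j) f)) * (∑ j : Fin N, Pn (pderiv (Sum.inl j) g)) := by
      rw [Finset.sum_add_distrib]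
      exact add_le_add
        (diag_sum_le _ _ (fun j => Pn_nonneg _) (fun j => Pn_nonneg _))
        (diag_sum_le _ _ (fun j => Pn_nonneg _) (fun j => Pn_nonneg _))
    exact step1.trans (step2.trans (ADBC_le hf hg))
  -- 3. the seed
  set h : MvPolynomial (Idx N) ℝ := ∑ t ∈ Finset.range N, poisson N f (tauPow N (t : ℤ) g)
    with hh
  have heq : oplus N h = poisson N (oplus N f) (oplus N g) := by
    unfold oplus
    rw [poisson_sum_left]
    refine Finset.sum_congr rfl fun l _ => ?_
    rw [poisson_sum_right, hh, tauPow_sum]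
    have step : ∀ t : ℕ, tauPow N ((l : ℤ) + 1) (poisson N f (tauPow N (t : ℤ) g))
        = poisson N (tauPow N ((l : ℤ) + 1) f) (tauPow N (((l : ℤ) + 1) + (t : ℤ)) g) :=
      fun t => by rw [poisson_tauPow, tauPow_tauPow]
    rw [Finset.sum_congr rfl fun t _ => step t]
    set G : Fin N → MvPolynomial (Idx N) ℝ := fun c =>
      poisson N (tauPow N ((l : ℤ) + 1) f) (rename (Sum.map (· + c) (· + c)) g) with hG
    have key : ∀ k : ℤ, poisson N (tauPow N ((l : ℤ) + 1) f) (tauPow N k g)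
        = G ((k : Fin N)) := fun k => rfl
    calc ∑ t ∈ Finset.range N,
          poisson N (tauPow N ((l : ℤ) + 1) f) (tauPow N (((l : ℤ) + 1) + (t : ℤ)) g)
        = ∑ t ∈ Finset.range N, G (((((l : ℤ) + 1) : ℤ) : Fin N) + ((t : ℕ) : Fin N)) := by
          refine Finset.sum_congr rfl fun t _ => ?_
          rw [key]
          congr 1
          push_cast
          ring
      _ = ∑ k : Fin N, G k := sum_range_shift G _
      _ = ∑ m ∈ Finset.range N, G ((((1 : ℤ)) : Fin N) + ((m : ℕ) : Fin N)) :=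
          (sum_range_shift G _).symm
      _ = ∑ m ∈ Finset.range N,
            poisson N (tauPow N ((l : ℤ) + 1) f) (tauPow N ((m : ℤ) + 1) g) := by
          refine Finset.sum_congr rfl fun m _ => ?_
          rw [key]
          congr 1
          push_cast
          ring
  have step1 : ∀ t : ℕ, Pn (poisson N f (tauPow N (t : ℤ) g)) ≤ ∑ j : Fin N,
      (Pn (pderiv (Sum.inl j) f) * Pn (pderiv (Sum.inr (j - ((t : ℕ) : Fin N))) g)
        + Pn (pderiv (Sum.inr j) f) * Pn (pderiv (Sum.inl (j - ((t : ℕ) : Fin N))) g)) := by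
    intro t
    refine (Pn_sum_le _ _).trans (Finset.sum_le_sum fun j _ => ?_)
    refine (Pn_sub_le _ _).trans
      (add_le_add ((Pn_mul_le _ _).trans_eq ?_) ((Pn_mul_le _ _).trans_eq ?_))
    · rw [pderiv_tauPow_inr, Pn_tauPow]
      norm_cast
    · rw [pderiv_tauPow_inl, Pn_tauPow]
      norm_cast
  have step2 : ∀ j : Fin N, ∑ t ∈ Finset.range N,
      (Pn (pderiv (Sum.inl j) f) * Pn (pderiv (Sum.inr (j - ((t : ℕ) : Fin N))) g)
        + Pn (pderiv (Sum.inr j) f) * Pn (pderiv (Sum.inl (j - ((t : ℕ) : Fin N))) g))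
      = Pn (pderiv (Sum.inl j) f) * (∑ k : Fin N, Pn (pderiv (Sum.inr k) g))
        + Pn (pderiv (Sum.inr j) f) * (∑ k : Fin N, Pn (pderiv (Sum.inl k) g)) := by
    intro j
    rw [Finset.sum_add_distrib, ← Finset.mul_sum, ← Finset.mul_sum,
      sum_range_sub_shift (fun k => Pn (pderiv (Sum.inr k) g)) j,
      sum_range_sub_shift (fun k => Pn (pderiv (Sum.inl k) g)) j]
  have bound3 : Pn h ≤ (r * Pn f) * (s * Pn g) := by
    calc Pn h ≤ ∑ t ∈ Finset.range N, Pn (poisson N f (tauPow N (t : ℤ) g)) := by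
          rw [hh]; exact Pn_sum_le _ _
      _ ≤ ∑ t ∈ Finset.range N, ∑ j : Fin N,
            (Pn (pderiv (Sum.inl j) f) * Pn (pderiv (Sum.inr (j - ((t : ℕ) : Fin N))) g)
              + Pn (pderiv (Sum.inr j) f) * Pn (pderiv (Sum.inl (j - ((t : ℕ) : Fin N))) g)) :=
          Finset.sum_le_sum fun t _ => step1 t
      _ = ∑ j : Fin N, ∑ t ∈ Finset.range N,
            (Pn (pderiv (Sum.inl j) f) * Pn (pderiv (Sum.inr (j - ((t : ℕ) : Fin N))) g)
              + Pn (pderiv (Sum.inr j) f) * Pn (pderiv (Sum.inl (j - ((t : ℕ) : Fin N))) g)) :=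
          Finset.sum_comm
      _ = ∑ j : Fin N,
            (Pn (pderiv (Sum.inl j) f) * (∑ k : Fin N, Pn (pderiv (Sum.inr k) g))
              + Pn (pderiv (Sum.inr j) f) * (∑ k : Fin N, Pn (pderiv (Sum.inl k) g))) :=
          Finset.sum_congr rfl fun j _ => step2 j
      _ = (∑ j : Fin N, Pn (pderiv (Sum.inl j) f)) * (∑ k : Fin N, Pn (pderiv (Sum.inr k) g)) +
            (∑ j : Fin N, Pn (pderiv (Sum.inr j) f)) * (∑ k : Fin N, Pn (pderiv (Sum.inl k) g)) := by
          rw [Finset.sum_add_distrib, ← Finset.sum_mul, ← Finset.sum_mul]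
      _ ≤ (r * Pn f) * (s * Pn g) := ADBC_le hf hg
  refine ⟨homog, ?_, h, heq, ?_⟩
  · calc pnorm 1 (poisson N f g) = Pn (poisson N f g) := pnorm_one_eq _
      _ ≤ (r * Pn f) * (s * Pn g) := bound2
      _ = (r : ℝ) * s * pnorm 1 f * pnorm 1 g := by rw [pnorm_one_eq f, pnorm_one_eq g]; ring
  · calc pnorm 1 h = Pn h := pnorm_one_eq _
      _ ≤ (r * Pn f) * (s * Pn g) := bound3
      _ = (r : ℝ) * s * pnorm 1 f * pnorm 1 g := by rw [pnorm_one_eq f, pnorm_one_eq g]; ring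
end

section
/- Let 𝒳 = χ^⊕ with χ a homogeneous polynomial of degree r+1 (r ≥ 1) and F = f^⊕ with f a homogeneous polynomial of degree s+1 (s ≥ 1), both cyclically symmetric functions on ℝ^N × ℝ^N. Define the Lie derivative of the vector field X_F along X_𝒳 by (L_𝒳 X_F)(z) := dX_F(z)[X_𝒳(z)]. Then for every z ∈ ℝ^{2N} one has ‖(L_𝒳 X_F)(z)‖ ≤ s |X_F|_1 |X_𝒳|_1 ‖z‖^{s+r−1}, where ‖·‖ is either the Euclidean (ℓ²) or the supremum (ℓ^∞) norm on ℝ^{2N}. -/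
open MvPolynomial Finset Real

/-- the norm `|X_F|_R := ‖X_1‖_R + ‖X_{N+1}‖_R` of the Hamiltonian vector field
`X_F = J∇F` (here `X_1 = ∂F/∂y_1` and `X_{N+1} = −∂F/∂x_1`). -/
noncomputable def hamNorm (N : ℕ) [NeZero N] (R : ℝ) (F : MvPolynomial (Idx N) ℝ) : ℝ :=
  pnorm R (pderiv (Sum.inr 0) F) + pnorm R (-pderiv (Sum.inl 0) F)

/-- the Hamiltonian vector field `X_F = J∇F` as a map on the phase space `ℝ^{2N}`:
`ẋ_j = ∂F/∂y_j`, `ẏ_j = −∂F/∂x_j`. -/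
noncomputable def Xvec (N : ℕ) (F : MvPolynomial (Idx N) ℝ) (z : Idx N → ℝ) : Idx N → ℝ :=
  Sum.elim (fun j => eval z (pderiv (Sum.inr j) F)) (fun j => -eval z (pderiv (Sum.inl j) F))

/-- the euclidean (`ℓ²`) norm on `ℝ^{2N}`; the supremum (`ℓ^∞`) norm is the `Pi` norm `‖·‖`. -/
noncomputable def enorm {N : ℕ} (z : Idx N → ℝ) : ℝ :=
  Real.sqrt (∑ l, z l ^ 2)


set_option linter.unusedSectionVars false
set_option linter.unusedVariables false
set_option linter.unnecessarySeqFocus false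
set_option linter.unusedTactic false
open ContinuousLinearMap

noncomputable def c1 {σ : Type*} (p : MvPolynomial σ ℝ) : ℝ := ∑ d ∈ p.support, |p.coeff d|

lemma c1_eq_of_subset {σ : Type*} {p : MvPolynomial σ ℝ} {T : Finset (σ →₀ ℕ)}
    (h : p.support ⊆ T) : c1 p = ∑ d ∈ T, |p.coeff d| :=
  Finset.sum_subset h (fun d _ hd => by
    simp [MvPolynomial.notMem_support_iff.1 hd])

lemma c1_nonneg {σ : Type*} (p : MvPolynomial σ ℝ) : 0 ≤ c1 p :=
  Finset.sum_nonneg fun _ _ => abs_nonneg _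

lemma c1_neg {σ : Type*} (p : MvPolynomial σ ℝ) : c1 (-p) = c1 p := by
  rw [c1_eq_of_subset (T := p.support) (by simp [MvPolynomial.support_neg])]
  simp [c1]

lemma c1_add_le {σ : Type*} [DecidableEq σ] (p q : MvPolynomial σ ℝ) : c1 (p + q) ≤ c1 p + c1 q := by
  rw [c1_eq_of_subset (T := p.support ∪ q.support) (MvPolynomial.support_add),
    c1_eq_of_subset (T := p.support ∪ q.support) (Finset.subset_union_left),
    c1_eq_of_subset (p := q) (T := p.support ∪ q.support) (Finset.subset_union_right),
    ← Finset.sum_add_distrib]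
  exact Finset.sum_le_sum fun d _ => by simpa using abs_add_le _ _

lemma c1_sum_le {σ ι : Type*} [DecidableEq σ] (T : Finset ι) (g : ι → MvPolynomial σ ℝ) :
    c1 (∑ i ∈ T, g i) ≤ ∑ i ∈ T, c1 (g i) := by
  classical
  induction T using Finset.induction with
  | empty => simp [c1]
  | insert a s h ih =>
    rw [Finset.sum_insert h, Finset.sum_insert h]
    exact (c1_add_le _ _).trans (by linarith)

lemma c1_monomial_le {σ : Type*} [DecidableEq σ] (d : σ →₀ ℕ) (c : ℝ) : c1 (monomial d c) ≤ |c| := by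
  classical
  rw [c1_eq_of_subset (T := {d}) (MvPolynomial.support_monomial_subset)]
  simp


section
variable {σ : Type*} [DecidableEq σ]

lemma c1_mul_monomial_le (p : MvPolynomial σ ℝ) (d : σ →₀ ℕ) (c : ℝ) :
    c1 (p * monomial d c) ≤ c1 p * |c| := by
  have hsub : (p * monomial d c).support ⊆ p.support.image (· + d) := by
    refine (MvPolynomial.support_mul _ _).trans ?_
    intro x hx
    rw [Finset.mem_add] at hx
    obtain ⟨a, ha, b, hb, rfl⟩ := hx
    have hb' : b = d := by
      have := MvPolynomial.support_monomial_subset hb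
      simpa using this
    exact Finset.mem_image.2 ⟨a, ha, by rw [hb']⟩
  rw [c1_eq_of_subset hsub, Finset.sum_image (fun a _ b _ h => by
    exact add_right_cancel h)]
  simp only [MvPolynomial.coeff_mul_monomial, abs_mul]
  rw [← Finset.sum_mul]
  rfl

lemma c1_mul_le (p q : MvPolynomial σ ℝ) : c1 (p * q) ≤ c1 p * c1 q := by
  conv_lhs => rw [q.as_sum, Finset.mul_sum]
  refine (c1_sum_le _ _).trans ?_
  have : ∑ d ∈ q.support, c1 (p * monomial d (q.coeff d)) ≤
      ∑ d ∈ q.support, c1 p * |q.coeff d| :=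
    Finset.sum_le_sum fun d _ => c1_mul_monomial_le p d _
  refine this.trans (le_of_eq ?_)
  rw [show c1 q = ∑ d ∈ q.support, |q.coeff d| from rfl, Finset.mul_sum]

lemma c1_rename {τ : Type*} [DecidableEq τ] (e : σ → τ) (he : Function.Injective e)
    (p : MvPolynomial σ ℝ) : c1 (rename e p) = c1 p := by
  rw [c1, support_rename_of_injective he,
    Finset.sum_image (fun a _ b _ h => Finsupp.mapDomain_injective he h)]
  exact Finset.sum_congr rfl fun d _ => by rw [coeff_rename_mapDomain e he]

lemma degsum_eq_of_mem_support {p : MvPolynomial σ ℝ} {n : ℕ} (hp : p.IsHomogeneous n)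
    {d : σ →₀ ℕ} (hd : d ∈ p.support) : (d.sum fun _ e => e) = n := by
  have h := hp (MvPolynomial.mem_support_iff.1 hd)
  rw [← h, Finsupp.weight_apply]
  simp

lemma sum_univ_eq_degsum [Fintype σ] (d : σ →₀ ℕ) :
    ∑ l : σ, d l = d.sum fun _ e => e :=
  (Finsupp.sum_fintype d (fun _ e => e) (fun _ => rfl)).symm

lemma pderiv_as_sum (p : MvPolynomial σ ℝ) (l : σ) :
    pderiv l p = ∑ d ∈ p.support, monomial (d - Finsupp.single l 1) (p.coeff d * d l) := by
  conv_lhs => rw [p.as_sum, map_sum]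
  exact Finset.sum_congr rfl fun d _ => by rw [pderiv_monomial]

lemma c1_pderiv_le (p : MvPolynomial σ ℝ) (l : σ) :
    c1 (pderiv l p) ≤ ∑ d ∈ p.support, |p.coeff d| * d l := by
  rw [pderiv_as_sum]
  refine (c1_sum_le _ _).trans (Finset.sum_le_sum fun d _ => ?_)
  refine (c1_monomial_le _ _).trans ?_
  rw [abs_mul]
  simp [abs_of_nonneg]

lemma sum_c1_pderiv_le [Fintype σ] {p : MvPolynomial σ ℝ} {n : ℕ} (hp : p.IsHomogeneous n) :
    ∑ l : σ, c1 (pderiv l p) ≤ n * c1 p := by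
  refine (Finset.sum_le_sum fun l _ => c1_pderiv_le p l).trans ?_
  rw [Finset.sum_comm]
  rw [c1, Finset.mul_sum]
  refine le_of_eq (Finset.sum_congr rfl fun d hd => ?_)
  rw [← Finset.mul_sum]
  have : ∑ l : σ, (d l : ℝ) = n := by
    rw [← Nat.cast_sum]
    rw [sum_univ_eq_degsum, degsum_eq_of_mem_support hp hd]
  push_cast
  rw [this]
  ring

lemma isHomogeneous_pderiv [Fintype σ] {p : MvPolynomial σ ℝ} {n : ℕ} (hp : p.IsHomogeneous n)
    (l : σ) : (pderiv l p).IsHomogeneous (n - 1) := by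
  rw [pderiv_as_sum]
  refine IsHomogeneous.sum _ _ _ fun d hd => ?_
  rcases Nat.eq_zero_or_pos (d l) with h | h
  · simp only [h, Nat.cast_zero, mul_zero, map_zero]
    exact isHomogeneous_zero _ _ _
  · refine isHomogeneous_monomial _ ?_
    have hle : Finsupp.single l 1 ≤ d := by
      rwa [Finsupp.single_le_iff]
    have : (d - Finsupp.single l 1) + Finsupp.single l 1 = d := tsub_add_cancel_of_le hle
    have hdeg : Finsupp.degree (d - Finsupp.single l 1) + Finsupp.degree (Finsupp.single l 1) = n := by
      have h2 := congrArg Finsupp.degree this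
      simp only [Finsupp.degree_eq_weight_one, map_add] at h2 ⊢
      rw [h2]
      have h3 := degsum_eq_of_mem_support hp hd
      rw [← h3, ← Finsupp.degree_eq_weight_one]; rfl
    have hsing : Finsupp.degree (Finsupp.single l 1) = 1 := by
      exact Finsupp.degree_single l 1
    omega

end


section
variable {σ : Type*} [Fintype σ] [DecidableEq σ]

lemma hasFDerivAt_evalPoly (p : MvPolynomial σ ℝ) (z : σ → ℝ) :
    HasFDerivAt (fun w : σ → ℝ => eval w p)
      (∑ l : σ, eval z (pderiv l p) • (proj l : (σ → ℝ) →L[ℝ] ℝ)) z := by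
  induction p using MvPolynomial.induction_on with
  | C a =>
    simp only [eval_C, pderiv_C, map_zero, zero_smul, Finset.sum_const_zero]
    exact hasFDerivAt_const a z
  | add p q hp hq =>
    have := hp.add hq
    simp only [map_add] at this ⊢
    refine this.congr_fderiv ?_
    rw [← Finset.sum_add_distrib]
    exact Finset.sum_congr rfl fun l _ => by rw [add_smul]
  | mul_X p n hp =>
    have hX : HasFDerivAt (fun w : σ → ℝ => w n) (proj n : (σ → ℝ) →L[ℝ] ℝ) z :=
      hasFDerivAt_apply n z
    have hmul := hp.mul hX
    have hcalc : ∀ l : σ, eval z (pderiv l (p * X n)) • (proj l : (σ → ℝ) →L[ℝ] ℝ)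
        = (z n * eval z (pderiv l p)) • proj l
          + (if n = l then eval z p else 0) • proj l := by
      intro l
      rw [(pderiv l).leibniz, pderiv_X]
      simp only [map_add, eval_mul, eval_X, smul_eq_mul, map_smul]
      rw [← add_smul]
      congr 1
      rw [Pi.single_apply]
      split <;> simp [mul_comm] <;> ring
    have heq : (eval z) p • (proj n : (σ → ℝ) →L[ℝ] ℝ)
        + z n • ∑ l : σ, eval z (pderiv l p) • (proj l : (σ → ℝ) →L[ℝ] ℝ)
        = ∑ l : σ, eval z (pderiv l (p * X n)) • (proj l : (σ → ℝ) →L[ℝ] ℝ) := by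
      simp only [hcalc, Finset.sum_add_distrib]
      rw [add_comm]
      congr 1
      · rw [Finset.smul_sum]
        exact Finset.sum_congr rfl fun l _ => by rw [smul_smul]
      · simp [ite_smul, Finset.sum_ite_eq]
    show HasFDerivAt (fun w : σ → ℝ => eval w (p * X n)) _ z
    simp only [eval_mul, eval_X]
    rw [← heq]
    exact hmul
end


section
variable {σ : Type*} [Fintype σ] [DecidableEq σ]

lemma abs_eval_le {p : MvPolynomial σ ℝ} {n : ℕ} (hp : p.IsHomogeneous n)
    {w : σ → ℝ} {M : ℝ} (hM : 0 ≤ M) (h : ∀ l, |w l| ≤ M) :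
    |eval w p| ≤ c1 p * M ^ n := by
  rw [eval_eq']
  refine (Finset.abs_sum_le_sum_abs _ _).trans ?_
  rw [c1, Finset.sum_mul]
  refine Finset.sum_le_sum fun d hd => ?_
  rw [abs_mul, abs_prod]
  refine mul_le_mul_of_nonneg_left ?_ (abs_nonneg _)
  calc ∏ i : σ, |w i ^ d i| ≤ ∏ i : σ, M ^ d i := by
        refine Finset.prod_le_prod (fun _ _ => abs_nonneg _) fun i _ => ?_
        rw [abs_pow]
        exact pow_le_pow_left₀ (abs_nonneg _) (h i) _
    _ = M ^ n := by
        rw [Finset.prod_pow_eq_pow_sum]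
        rw [sum_univ_eq_degsum, degsum_eq_of_mem_support hp hd]

-- sum of d-th powers is at most the d-th power of the sum (nonneg terms, d ≥ 1)
lemma sum_pow_le_pow_sum' {a : σ → ℝ} (ha : ∀ i, 0 ≤ a i) {d : ℕ} (hd : 1 ≤ d) :
    ∑ i : σ, a i ^ d ≤ (∑ i : σ, a i) ^ d := by
  have hS : ∀ i, a i ≤ ∑ i : σ, a i := fun i =>
    Finset.single_le_sum (fun j _ => ha j) (Finset.mem_univ i)
  have hS0 : 0 ≤ ∑ i : σ, a i := Finset.sum_nonneg fun j _ => ha j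
  calc ∑ i : σ, a i ^ d ≤ ∑ i : σ, (∑ j : σ, a j) ^ (d - 1) * a i := by
        refine Finset.sum_le_sum fun i _ => ?_
        have : a i ^ d = a i ^ (d - 1) * a i := by
          rw [← pow_succ]
          congr 1
          omega
        rw [this]
        exact mul_le_mul_of_nonneg_right (pow_le_pow_left₀ (ha i) (hS i) _) (ha i)
    _ = (∑ j : σ, a j) ^ d := by
        rw [← Finset.mul_sum, ← pow_succ]
        congr 1
        omega
end

section
variable {σ ι : Type*} [Fintype σ] [Fintype ι] [DecidableEq σ]

lemma amgm_nat_weights (b : σ → ℝ) (hb : ∀ i, 0 ≤ b i) (m : σ →₀ ℕ) {d : ℕ} (hd : 1 ≤ d)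
    (hm : (m.sum fun _ e => e) = d) :
    ∏ i : σ, b i ^ m i ≤ (1 / d) * ∑ i : σ, (m i : ℝ) * b i ^ d := by
  have hd0 : (d : ℝ) ≠ 0 := Nat.cast_ne_zero.2 (by omega)
  have hsum : ∑ i : σ, (m i : ℝ) = (d : ℝ) := by
    rw [← Nat.cast_sum, sum_univ_eq_degsum, hm]
  have key := Real.geom_mean_le_arith_mean_weighted Finset.univ
    (fun i => (m i : ℝ) / d) (fun i => b i ^ d)
    (fun i _ => by positivity)
    (by rw [← Finset.sum_div, hsum]; field_simp)
    (fun i _ => pow_nonneg (hb i) d)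
  have hl : ∀ i : σ, (b i ^ d : ℝ) ^ ((m i : ℝ) / d) = b i ^ m i := by
    intro i
    rw [← Real.rpow_natCast (b i) d, ← Real.rpow_mul (hb i)]
    have : (d : ℝ) * ((m i : ℝ) / d) = (m i : ℝ) := by field_simp
    rw [this, Real.rpow_natCast]
  calc ∏ i : σ, b i ^ m i = ∏ i : σ, (b i ^ d : ℝ) ^ ((m i : ℝ) / d) := by
        exact (Finset.prod_congr rfl fun i _ => hl i).symm
    _ ≤ ∑ i : σ, ((m i : ℝ) / d) * b i ^ d := key
    _ = (1 / d) * ∑ i : σ, (m i : ℝ) * b i ^ d := by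
        rw [Finset.mul_sum]
        exact Finset.sum_congr rfl fun i _ => by ring

lemma monomial_shift_sq_sum (m : σ →₀ ℕ) {d : ℕ} (hd : 1 ≤ d)
    (hm : (m.sum fun _ e => e) = d) (z : σ → ℝ) (e : ι → σ → σ)
    (hinj : ∀ i, Function.Injective fun j => e j i) :
    ∑ j : ι, (∏ i : σ, z (e j i) ^ m i) ^ 2 ≤ (∑ l : σ, z l ^ 2) ^ d := by
  classical
  have hsum : ∑ i : σ, (m i : ℝ) = (d : ℝ) := by
    rw [← Nat.cast_sum, sum_univ_eq_degsum, hm]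
  have hd0 : (d : ℝ) ≠ 0 := Nat.cast_ne_zero.2 (by omega)
  set S := ∑ l : σ, z l ^ 2 with hS
  have hS0 : 0 ≤ S := Finset.sum_nonneg fun l _ => sq_nonneg _
  have step1 : ∀ j : ι, (∏ i : σ, z (e j i) ^ m i) ^ 2
      ≤ (1 / d) * ∑ i : σ, (m i : ℝ) * (z (e j i) ^ 2) ^ d := by
    intro j
    have h1 : (∏ i : σ, z (e j i) ^ m i) ^ 2 = ∏ i : σ, (z (e j i) ^ 2) ^ m i := by
      rw [← Finset.prod_pow]
      exact Finset.prod_congr rfl fun i _ => by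
        rw [← pow_mul, mul_comm, pow_mul]
    rw [h1]
    exact amgm_nat_weights _ (fun i => sq_nonneg _) m hd hm
  have step2 : ∀ i : σ, ∑ j : ι, (z (e j i) ^ 2) ^ d ≤ S ^ d := by
    intro i
    have h2 : ∑ j : ι, (z (e j i) ^ 2) ^ d
        = ∑ l ∈ Finset.univ.image (fun j => e j i), (z l ^ 2) ^ d := by
      rw [Finset.sum_image (fun a _ b _ h => hinj i h)]
    rw [h2]
    refine le_trans (Finset.sum_le_sum_of_subset_of_nonneg (Finset.subset_univ _)
      (fun l _ _ => by positivity)) ?_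
    exact sum_pow_le_pow_sum' (fun l => sq_nonneg _) hd
  calc ∑ j : ι, (∏ i : σ, z (e j i) ^ m i) ^ 2
      ≤ ∑ j : ι, (1 / d) * ∑ i : σ, (m i : ℝ) * (z (e j i) ^ 2) ^ d :=
        Finset.sum_le_sum fun j _ => step1 j
    _ = (1 / d) * ∑ i : σ, (m i : ℝ) * ∑ j : ι, (z (e j i) ^ 2) ^ d := by
        rw [← Finset.mul_sum, Finset.sum_comm]
        congr 1
        exact Finset.sum_congr rfl fun i _ => by rw [Finset.mul_sum]
    _ ≤ (1 / d) * ∑ i : σ, (m i : ℝ) * S ^ d := by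
        refine mul_le_mul_of_nonneg_left (Finset.sum_le_sum fun i _ => ?_) (by positivity)
        exact mul_le_mul_of_nonneg_left (step2 i) (Nat.cast_nonneg _)
    _ = S ^ d := by
        rw [← Finset.sum_mul, hsum]
        field_simp

lemma sqrt_pow' {x : ℝ} (hx : 0 ≤ x) (n : ℕ) : Real.sqrt (x ^ n) = Real.sqrt x ^ n := by
  rw [← Real.sqrt_sq (pow_nonneg (Real.sqrt_nonneg x) n)]
  congr 1
  rw [← pow_mul, mul_comm n 2, pow_mul, Real.sq_sqrt hx]

lemma sqrt_sum_sq_le {N : ℕ} (Q : MvPolynomial σ ℝ) {d : ℕ} (hd : 1 ≤ d)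
    (hQ : Q.IsHomogeneous d) (z : σ → ℝ) (e : Fin N → σ → σ)
    (hinj : ∀ i, Function.Injective fun j => e j i) :
    Real.sqrt (∑ j : Fin N, (eval (z ∘ e j) Q) ^ 2)
      ≤ c1 Q * Real.sqrt (∑ l : σ, z l ^ 2) ^ d := by
  classical
  set v : EuclideanSpace ℝ (Fin N) := WithLp.toLp 2 (fun j => eval (z ∘ e j) Q) with hv
  have hnorm : Real.sqrt (∑ j : Fin N, (eval (z ∘ e j) Q) ^ 2) = ‖v‖ := by
    rw [EuclideanSpace.norm_eq]
    congr 1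
    exact Finset.sum_congr rfl fun j _ => by rw [Real.norm_eq_abs, sq_abs]
  set u : (σ →₀ ℕ) → EuclideanSpace ℝ (Fin N) :=
    fun m => WithLp.toLp 2 (fun j => ∏ i : σ, z (e j i) ^ m i) with hu
  have hdecomp : v = ∑ m ∈ Q.support, Q.coeff m • u m := by
    ext j
    rw [hv]
    show eval (z ∘ e j) Q = (∑ m ∈ Q.support, Q.coeff m • u m) j
    rw [WithLp.ofLp_sum, Finset.sum_apply]
    rw [eval_eq']
    exact Finset.sum_congr rfl fun m _ => by
      show Q.coeff m * ∏ i : σ, (z ∘ e j) i ^ m i = Q.coeff m • u m j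
      simp [hu, smul_eq_mul]
  have hbound : ∀ m ∈ Q.support, ‖u m‖ ≤ Real.sqrt (∑ l : σ, z l ^ 2) ^ d := by
    intro m hm
    rw [EuclideanSpace.norm_eq]
    have : ∑ j : Fin N, ‖u m j‖ ^ 2 = ∑ j : Fin N, (∏ i : σ, z (e j i) ^ m i) ^ 2 := by
      exact Finset.sum_congr rfl fun j _ => by rw [Real.norm_eq_abs, sq_abs]
    rw [this, ← sqrt_pow' (Finset.sum_nonneg fun l _ => sq_nonneg _)]
    exact Real.sqrt_le_sqrt
      (monomial_shift_sq_sum m hd (degsum_eq_of_mem_support hQ hm) z e hinj)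
  rw [hnorm, hdecomp]
  refine (norm_sum_le _ _).trans ?_
  rw [c1, Finset.sum_mul]
  refine Finset.sum_le_sum fun m hm => ?_
  rw [norm_smul, Real.norm_eq_abs]
  exact mul_le_mul_of_nonneg_left (hbound m hm) (abs_nonneg _)

end

/-CCC-/

section
variable {N : ℕ} [NeZero N]

/-- cyclic shift on the index set, as an equivalence -/
def shiftE (N : ℕ) [NeZero N] (t : Fin N) : Idx N ≃ Idx N :=
  Equiv.sumCongr (Equiv.addRight t) (Equiv.addRight t)

lemma shiftE_coe (t : Fin N) : ⇑(shiftE N t) = Sum.map (· + t) (· + t) := by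
  funext k; cases k <;> simp [shiftE]

lemma shiftE_inl (t a : Fin N) : shiftE N t (Sum.inl a) = Sum.inl (a + t) := by simp [shiftE]
lemma shiftE_inr (t a : Fin N) : shiftE N t (Sum.inr a) = Sum.inr (a + t) := by simp [shiftE]

lemma shiftE_comp (a b : Fin N) : ⇑(shiftE N b) ∘ ⇑(shiftE N a) = ⇑(shiftE N (a + b)) := by
  funext k; cases k <;> simp [shiftE_coe, add_assoc]

open Fin.CommRing in
lemma tauPow_eq (s : ℤ) (f : MvPolynomial (Idx N) ℝ) :
    tauPow N s f = rename (⇑(shiftE N ((s : Fin N)))) f := by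
  rw [tauPow, shiftE_coe]

open Fin.CommRing in
lemma oplus_eq (f : MvPolynomial (Idx N) ℝ) :
    oplus N f = ∑ t : Fin N, rename (⇑(shiftE N t)) f := by
  rw [oplus]
  refine Finset.sum_bij' (fun l _ => ((l : Fin N) + 1)) (fun t _ => ((t - 1 : Fin N) : ℕ))
    ?_ ?_ ?_ ?_ ?_
  · intro a ha; exact Finset.mem_univ _
  · intro t ht; exact Finset.mem_range.2 (Fin.is_lt _)
  · intro a ha
    show (((a : Fin N) + 1 - 1 : Fin N) : ℕ) = a
    have h2 : ((a : Fin N) + 1 - 1) = (a : Fin N) := by ring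
    rw [h2]
    exact Fin.val_cast_of_lt (Finset.mem_range.1 ha)
  · intro t ht
    show ((((t - 1 : Fin N) : ℕ) : Fin N) + 1) = t
    rw [Fin.cast_val_eq_self]
    ring
  · intro a ha
    rw [tauPow_eq]
    congr 2
    push_cast
    simp [Fin.cast_val_eq_self]

lemma rename_shiftE_oplus (c : Fin N) (f : MvPolynomial (Idx N) ℝ) :
    rename (⇑(shiftE N c)) (oplus N f) = oplus N f := by
  rw [oplus_eq, map_sum]
  have h : ∀ t : Fin N, rename (⇑(shiftE N c)) (rename (⇑(shiftE N t)) f)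
      = rename (⇑(shiftE N (t + c))) f := by
    intro t
    rw [rename_rename, shiftE_comp]
  simp only [h]
  exact Fintype.sum_equiv (Equiv.addRight c) _ _ (fun t => rfl)

/-- components of the Hamiltonian vector field as polynomials -/
noncomputable def Pc (N : ℕ) (F : MvPolynomial (Idx N) ℝ) : Idx N → MvPolynomial (Idx N) ℝ :=
  Sum.elim (fun j => pderiv (Sum.inr j) F) (fun j => -pderiv (Sum.inl j) F)

lemma Pc_shift {F : MvPolynomial (Idx N) ℝ} {t : Fin N}
    (hF : rename (⇑(shiftE N t)) F = F) (k : Idx N) :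
    Pc N F (shiftE N t k) = rename (⇑(shiftE N t)) (Pc N F k) := by
  have hinj : Function.Injective (⇑(shiftE N t)) := (shiftE N t).injective
  cases k with
  | inl a =>
    have := pderiv_rename hinj (Sum.inr a) F
    rw [Pc, shiftE_inl, Sum.elim_inl, Sum.elim_inl, ← this, hF]
    rfl
  | inr a =>
    have := pderiv_rename hinj (Sum.inl a) F
    rw [Pc, shiftE_inr, Sum.elim_inr, Sum.elim_inr, map_neg, ← this, hF]
    rfl

/-- the components of the Lie derivative as polynomials -/
noncomputable def Qp (N : ℕ) (F G : MvPolynomial (Idx N) ℝ) (k : Idx N) :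
    MvPolynomial (Idx N) ℝ :=
  ∑ l : Idx N, pderiv l (Pc N F k) * Pc N G l

lemma Qp_shift {F G : MvPolynomial (Idx N) ℝ} {t : Fin N}
    (hF : rename (⇑(shiftE N t)) F = F) (hG : rename (⇑(shiftE N t)) G = G) (k : Idx N) :
    Qp N F G (shiftE N t k) = rename (⇑(shiftE N t)) (Qp N F G k) := by
  have hinj : Function.Injective (⇑(shiftE N t)) := (shiftE N t).injective
  rw [Qp, Qp, map_sum]
  rw [Pc_shift hF]
  refine (Fintype.sum_equiv (shiftE N t) _ _ fun l => ?_).symm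
  rw [map_mul, ← Pc_shift hG, pderiv_rename hinj l]

end


section Glue
variable {N : ℕ} [NeZero N]

lemma pnorm_one_eq_c1 (f : MvPolynomial (Idx N) ℝ) : pnorm 1 f = c1 f := by
  simp [pnorm, c1]

lemma hamNorm_one_eq (F : MvPolynomial (Idx N) ℝ) :
    hamNorm N 1 F = c1 (Pc N F (Sum.inl 0)) + c1 (Pc N F (Sum.inr 0)) := by
  rw [hamNorm, pnorm_one_eq_c1, pnorm_one_eq_c1]
  rfl

lemma hamNorm_one_nonneg (F : MvPolynomial (Idx N) ℝ) : 0 ≤ hamNorm N 1 F := by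
  rw [hamNorm_one_eq]
  exact add_nonneg (c1_nonneg _) (c1_nonneg _)

lemma oplus_isHomogeneous {f : MvPolynomial (Idx N) ℝ} {n : ℕ} (hf : f.IsHomogeneous n) :
    (oplus N f).IsHomogeneous n := by
  rw [oplus_eq]
  exact IsHomogeneous.sum _ _ _ fun t _ => hf.rename_isHomogeneous

lemma Pc_isHomogeneous {F : MvPolynomial (Idx N) ℝ} {n : ℕ} (hF : F.IsHomogeneous n)
    (k : Idx N) : (Pc N F k).IsHomogeneous (n - 1) := by
  cases k with
  | inl j => exact isHomogeneous_pderiv hF _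
  | inr j => exact (isHomogeneous_pderiv hF _).neg

lemma Qp_isHomogeneous {F G : MvPolynomial (Idx N) ℝ} {s r : ℕ} (hs : 1 ≤ s)
    (hF : F.IsHomogeneous (s + 1)) (hG : G.IsHomogeneous (r + 1)) (k : Idx N) :
    (Qp N F G k).IsHomogeneous (s + r - 1) := by
  rw [Qp]
  refine IsHomogeneous.sum _ _ _ fun l _ => ?_
  have h1 : (pderiv l (Pc N F k)).IsHomogeneous (s - 1) := by
    have := isHomogeneous_pderiv (Pc_isHomogeneous hF k) l
    simpa using this
  have h2 : (Pc N G l).IsHomogeneous r := by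
    have := Pc_isHomogeneous hG l
    simpa using this
  have := h1.mul h2
  have heq : s - 1 + r = s + r - 1 := by omega
  rwa [heq] at this

lemma fderiv_Xvec_apply (F G : MvPolynomial (Idx N) ℝ) (z : Idx N → ℝ) :
    fderiv ℝ (Xvec N F) z (Xvec N G z) = fun k => eval z (Qp N F G k) := by
  have hfun : ∀ H : MvPolynomial (Idx N) ℝ,
      Xvec N H = fun w k => eval w (Pc N H k) := by
    intro H
    funext w k
    cases k with
    | inl j => simp [Xvec, Pc]
    | inr j => simp [Xvec, Pc]
  have hD : HasFDerivAt (fun w k => eval w (Pc N F k))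
      (ContinuousLinearMap.pi fun k =>
        ∑ l : Idx N, eval z (pderiv l (Pc N F k)) • (proj l : (Idx N → ℝ) →L[ℝ] ℝ)) z :=
    hasFDerivAt_pi.2 fun k => hasFDerivAt_evalPoly (Pc N F k) z
  rw [hfun F, hfun G, hD.fderiv]
  funext k
  rw [ContinuousLinearMap.pi_apply, ContinuousLinearMap.sum_apply, Qp, map_sum]
  refine Finset.sum_congr rfl fun l _ => ?_
  rw [ContinuousLinearMap.smul_apply, ContinuousLinearMap.proj_apply, map_mul, smul_eq_mul]

lemma sqrt_add_le' {a b : ℝ} (ha : 0 ≤ a) (hb : 0 ≤ b) :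
    Real.sqrt (a + b) ≤ Real.sqrt a + Real.sqrt b := by
  have h1 : a + b ≤ (Real.sqrt a + Real.sqrt b) ^ 2 := by
    nlinarith [Real.sq_sqrt ha, Real.sq_sqrt hb,
      mul_nonneg (Real.sqrt_nonneg a) (Real.sqrt_nonneg b)]
  calc Real.sqrt (a + b) ≤ Real.sqrt ((Real.sqrt a + Real.sqrt b) ^ 2) := Real.sqrt_le_sqrt h1
    _ = Real.sqrt a + Real.sqrt b := Real.sqrt_sq (by positivity)

end Glue

/-- For `𝒳 = χ^⊕` (`χ` homogeneous of degree `r+1`, `r ≥ 1`) and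
`F = f^⊕` (`f` homogeneous of degree `s+1`, `s ≥ 1`), the Lie derivative
`(L_𝒳 X_F)(z) = dX_F(z)[X_𝒳(z)]` satisfies
`‖(L_𝒳 X_F)(z)‖ ≤ s |X_F|₁ |X_𝒳|₁ ‖z‖^{s+r−1}` for every `z`, both for the supremum
(`ℓ^∞`) and the euclidean (`ℓ²`) norm on `ℝ^{2N}`. -/
theorem lie_derivative_field_estimate (N : ℕ) [NeZero N]
    (r s : ℕ) (hr : 1 ≤ r) (hs : 1 ≤ s)
    (χ f : MvPolynomial (Idx N) ℝ)
    (hχ : χ.IsHomogeneous (r + 1)) (hf : f.IsHomogeneous (s + 1)) :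
    (∀ z : Idx N → ℝ,
        ‖fderiv ℝ (Xvec N (oplus N f)) z (Xvec N (oplus N χ) z)‖ ≤
          s * hamNorm N 1 (oplus N f) * hamNorm N 1 (oplus N χ) * ‖z‖ ^ (s + r - 1)) ∧
    (∀ z : Idx N → ℝ,
        _root_.enorm (fderiv ℝ (Xvec N (oplus N f)) z (Xvec N (oplus N χ) z)) ≤
          s * hamNorm N 1 (oplus N f) * hamNorm N 1 (oplus N χ) *
            _root_.enorm z ^ (s + r - 1)) := by
  set F := oplus N f with hFdef
  set G := oplus N χ with hGdef
  set d := s + r - 1 with hddef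
  have hd : 1 ≤ d := by omega
  have hF : F.IsHomogeneous (s + 1) := oplus_isHomogeneous hf
  have hG : G.IsHomogeneous (r + 1) := oplus_isHomogeneous hχ
  have hinvF : ∀ t : Fin N, rename (⇑(shiftE N t)) F = F := fun t => rename_shiftE_oplus t f
  have hinvG : ∀ t : Fin N, rename (⇑(shiftE N t)) G = G := fun t => rename_shiftE_oplus t χ
  have hQhom : ∀ k, (Qp N F G k).IsHomogeneous d := Qp_isHomogeneous hs hF hG
  have hQshift : ∀ (t : Fin N) (k : Idx N),
      Qp N F G (shiftE N t k) = rename (⇑(shiftE N t)) (Qp N F G k) :=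
    fun t k => Qp_shift (hinvF t) (hinvG t) k
  have hQinl : ∀ j : Fin N, Qp N F G (Sum.inl j)
      = rename (⇑(shiftE N j)) (Qp N F G (Sum.inl 0)) := by
    intro j
    rw [← hQshift j (Sum.inl 0), shiftE_inl, zero_add]
  have hQinr : ∀ j : Fin N, Qp N F G (Sum.inr j)
      = rename (⇑(shiftE N j)) (Qp N F G (Sum.inr 0)) := by
    intro j
    rw [← hQshift j (Sum.inr 0), shiftE_inr, zero_add]
  -- bound on the coefficient norms of the two base components
  have hPcG : ∀ l : Idx N, c1 (Pc N G l) ≤ hamNorm N 1 G := by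
    intro l
    have key : ∀ (j : Fin N) (k0 : Idx N), l = shiftE N j k0 →
        c1 (Pc N G l) = c1 (Pc N G k0) := by
      intro j k0 hl
      rw [hl, Pc_shift (hinvG j) k0, c1_rename _ (shiftE N j).injective]
    rw [hamNorm_one_eq]
    cases l with
    | inl j =>
      rw [key j (Sum.inl 0) (by rw [shiftE_inl, zero_add])]
      have := c1_nonneg (Pc N G (Sum.inr 0)); linarith
    | inr j =>
      rw [key j (Sum.inr 0) (by rw [shiftE_inr, zero_add])]
      have := c1_nonneg (Pc N G (Sum.inl 0)); linarith
  have hQc : ∀ k0 n0, (Pc N F k0).IsHomogeneous n0 →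
      c1 (Qp N F G k0) ≤ n0 * c1 (Pc N F k0) * hamNorm N 1 G := by
    intro k0 n0 hk0
    rw [Qp]
    refine (c1_sum_le _ _).trans ?_
    have step : ∀ l : Idx N, c1 (pderiv l (Pc N F k0) * Pc N G l)
        ≤ c1 (pderiv l (Pc N F k0)) * hamNorm N 1 G := by
      intro l
      refine (c1_mul_le _ _).trans ?_
      exact mul_le_mul_of_nonneg_left (hPcG l) (c1_nonneg _)
    refine (Finset.sum_le_sum fun l _ => step l).trans ?_
    rw [← Finset.sum_mul]
    exact mul_le_mul_of_nonneg_right (sum_c1_pderiv_le hk0) (hamNorm_one_nonneg G)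
  have hP1 : (Pc N F (Sum.inl 0)).IsHomogeneous s := by
    have := Pc_isHomogeneous hF (Sum.inl 0); simpa using this
  have hP2 : (Pc N F (Sum.inr 0)).IsHomogeneous s := by
    have := Pc_isHomogeneous hF (Sum.inr 0); simpa using this
  have hcsum : c1 (Qp N F G (Sum.inl 0)) + c1 (Qp N F G (Sum.inr 0))
      ≤ s * hamNorm N 1 F * hamNorm N 1 G := by
    have h1 := hQc (Sum.inl 0) s hP1
    have h2 := hQc (Sum.inr 0) s hP2
    rw [hamNorm_one_eq]
    nlinarith [hamNorm_one_nonneg G, c1_nonneg (Pc N F (Sum.inl 0)),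
      c1_nonneg (Pc N F (Sum.inr 0))]
  have hcx : c1 (Qp N F G (Sum.inl 0)) ≤ s * hamNorm N 1 F * hamNorm N 1 G := by
    have := c1_nonneg (Qp N F G (Sum.inr 0)); linarith
  have hcy : c1 (Qp N F G (Sum.inr 0)) ≤ s * hamNorm N 1 F * hamNorm N 1 G := by
    have := c1_nonneg (Qp N F G (Sum.inl 0)); linarith
  have hLie : ∀ z : Idx N → ℝ,
      fderiv ℝ (Xvec N F) z (Xvec N G z) = fun k => eval z (Qp N F G k) :=
    fderiv_Xvec_apply F G
  have hHnn : 0 ≤ (s : ℝ) * hamNorm N 1 F * hamNorm N 1 G :=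
    mul_nonneg (mul_nonneg (Nat.cast_nonneg _) (hamNorm_one_nonneg F)) (hamNorm_one_nonneg G)
  constructor
  · -- sup norm bound
    intro z
    rw [hLie z]
    have hRHS : 0 ≤ (s : ℝ) * hamNorm N 1 F * hamNorm N 1 G * ‖z‖ ^ d :=
      mul_nonneg hHnn (pow_nonneg (norm_nonneg z) d)
    refine (pi_norm_le_iff_of_nonneg hRHS).2 fun k => ?_
    have habs : ∀ (k0 : Idx N) (j : Fin N), k = shiftE N j k0 →
        |eval z (Qp N F G k0)| ≤ 1 → True := fun _ _ _ _ => trivial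
    have hbd : ∀ (j : Fin N) (k0 : Idx N), Qp N F G k = rename (⇑(shiftE N j)) (Qp N F G k0) →
        c1 (Qp N F G k0) ≤ (s : ℝ) * hamNorm N 1 F * hamNorm N 1 G →
        ‖eval z (Qp N F G k)‖ ≤ (s : ℝ) * hamNorm N 1 F * hamNorm N 1 G * ‖z‖ ^ d := by
      intro j k0 hk hc
      rw [Real.norm_eq_abs, hk, eval_rename]
      have hev := abs_eval_le (hQhom k0) (w := z ∘ ⇑(shiftE N j)) (M := ‖z‖)
        (norm_nonneg z) (fun l => by
          have := norm_le_pi_norm z ((shiftE N j) l)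
          simpa [Real.norm_eq_abs] using this)
      refine hev.trans ?_
      exact mul_le_mul_of_nonneg_right hc (pow_nonneg (norm_nonneg z) d)
    cases k with
    | inl j => exact hbd j (Sum.inl 0) (hQinl j) hcx
    | inr j => exact hbd j (Sum.inr 0) (hQinr j) hcy
  · -- euclidean norm bound
    intro z
    rw [hLie z]
    have hsplit : ∑ k : Idx N, (eval z (Qp N F G k)) ^ 2
        = (∑ j : Fin N, (eval z (Qp N F G (Sum.inl j))) ^ 2)
          + ∑ j : Fin N, (eval z (Qp N F G (Sum.inr j))) ^ 2 :=
      Fintype.sum_sum_type _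
    have hinj : ∀ i : Idx N, Function.Injective fun j : Fin N => shiftE N j i := by
      intro i
      cases i with
      | inl a =>
        intro j j' h
        simpa [shiftE_inl] using h
      | inr a =>
        intro j j' h
        simpa [shiftE_inr] using h
    have hx := sqrt_sum_sq_le (Qp N F G (Sum.inl 0)) hd (hQhom _) z
      (fun j => ⇑(shiftE N j)) hinj
    have hy := sqrt_sum_sq_le (Qp N F G (Sum.inr 0)) hd (hQhom _) z
      (fun j => ⇑(shiftE N j)) hinj
    have hxx : ∀ j : Fin N, eval z (Qp N F G (Sum.inl j))
        = eval (z ∘ ⇑(shiftE N j)) (Qp N F G (Sum.inl 0)) := fun j => by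
      rw [hQinl j, eval_rename]
    have hyy : ∀ j : Fin N, eval z (Qp N F G (Sum.inr j))
        = eval (z ∘ ⇑(shiftE N j)) (Qp N F G (Sum.inr 0)) := fun j => by
      rw [hQinr j, eval_rename]
    show Real.sqrt (∑ k : Idx N, (eval z (Qp N F G k)) ^ 2) ≤ _
    rw [hsplit]
    have h1 : Real.sqrt ((∑ j : Fin N, (eval z (Qp N F G (Sum.inl j))) ^ 2)
        + ∑ j : Fin N, (eval z (Qp N F G (Sum.inr j))) ^ 2)
        ≤ Real.sqrt (∑ j : Fin N, (eval z (Qp N F G (Sum.inl j))) ^ 2)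
          + Real.sqrt (∑ j : Fin N, (eval z (Qp N F G (Sum.inr j))) ^ 2) :=
      sqrt_add_le' (Finset.sum_nonneg fun _ _ => sq_nonneg _)
        (Finset.sum_nonneg fun _ _ => sq_nonneg _)
    refine h1.trans ?_
    have hE : _root_.enorm z = Real.sqrt (∑ l : Idx N, z l ^ 2) := rfl
    have h2 : Real.sqrt (∑ j : Fin N, (eval z (Qp N F G (Sum.inl j))) ^ 2)
        ≤ c1 (Qp N F G (Sum.inl 0)) * _root_.enorm z ^ d := by
      rw [hE]
      simpa only [← hxx] using hx
    have h3 : Real.sqrt (∑ j : Fin N, (eval z (Qp N F G (Sum.inr j))) ^ 2)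
        ≤ c1 (Qp N F G (Sum.inr 0)) * _root_.enorm z ^ d := by
      rw [hE]
      simpa only [← hyy] using hy
    have hEnn : 0 ≤ _root_.enorm z ^ d := pow_nonneg (Real.sqrt_nonneg _) d
    calc _ ≤ c1 (Qp N F G (Sum.inl 0)) * _root_.enorm z ^ d
          + c1 (Qp N F G (Sum.inr 0)) * _root_.enorm z ^ d := add_le_add h2 h3
      _ = (c1 (Qp N F G (Sum.inl 0)) + c1 (Qp N F G (Sum.inr 0))) * _root_.enorm z ^ d := by ring
      _ ≤ (s : ℝ) * hamNorm N 1 F * hamNorm N 1 G * _root_.enorm z ^ d :=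
          mul_le_mul_of_nonneg_right hcsum hEnn
end
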